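/- Consider the flat-Earth case c = 0 with constants a>0, b>0, g0>0. Let (x(·), p(·)) : [0,t_f] → ℝ⁴ × ℝ⁴ be a differentiable solution of the MTTP state and adjoint equations with c = 0, for some measurable control u, and let γ_f ∈ ℝ with cos γ_f ≠ 0 satisfy the transversality condition p1(t_f) cos γ_f + p2(t_f) sin γ_f = 0. Then p1 and p2 are constant on [0,t_f], p1 = −p2 tan γ_f, and the second derivative of t ↦ p4(t) satisfies p̈4(t) = a p2 cos(x3(t) − γ_f)/cos γ_f for all t ∈ [0,t_f]. -/

import Mathlib

lemma const_of_deriv_zero {tf : ℝ} (f : ℝ → ℝ)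
    (hf : ∀ t ∈ Set.Icc 0 tf, HasDerivAt f 0 t) :
    ∀ t ∈ Set.Icc 0 tf, f t = f 0 := by
  intro t ht
  have hcont : ContinuousOn f (Set.Icc 0 t) := fun s hs =>
    ((hf s ⟨hs.1, hs.2.trans ht.2⟩).continuousAt).continuousWithinAt
  have := constant_of_has_deriv_right_zero (f := f) (a := 0) (b := t) hcont
    (fun s hs => ((hf s ⟨hs.1, hs.2.le.trans ht.2⟩).hasDerivWithinAt))
  exact this t ⟨ht.1, le_refl t⟩

/-- Flat-Earth case (c = 0): the state and adjoint equations are written with c = 0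
substituted. The conclusion about the second derivative of p4 is expressed through
the fact that, by the adjoint equation, ṗ4 = −p3 on [0,tf]. -/
theorem stmt17
(a b g0 : ℝ) (ha : 0 < a) (hb : 0 < b) (hg0 : 0 < g0)
    (tf : ℝ) (htf : 0 < tf)
    (x1 x2 x3 x4 p1 p2 p3 p4 u : ℝ → ℝ)
    (hu_meas : Measurable u)
    (hu : ∀ t ∈ Set.Icc 0 tf, u t ∈ Set.Icc (-1 : ℝ) 1)
    (hx1 : ∀ t ∈ Set.Icc 0 tf, HasDerivAt x1 (a * Real.cos (x3 t)) t)
    (hx2 : ∀ t ∈ Set.Icc 0 tf, HasDerivAt x2 (a * Real.sin (x3 t) - g0) t)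
    (hx3 : ∀ t ∈ Set.Icc 0 tf, HasDerivAt x3 (x4 t) t)
    (hx4 : ∀ t ∈ Set.Icc 0 tf, HasDerivAt x4 (b * u t) t)
    (hp1 : ∀ t ∈ Set.Icc 0 tf, HasDerivAt p1 0 t)
    (hp2 : ∀ t ∈ Set.Icc 0 tf, HasDerivAt p2 0 t)
    (hp3 : ∀ t ∈ Set.Icc 0 tf,
      HasDerivAt p3 (a * (p1 t * Real.sin (x3 t) - p2 t * Real.cos (x3 t))) t)
    (hp4 : ∀ t ∈ Set.Icc 0 tf, HasDerivAt p4 (-(p3 t)) t)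
    (γf : ℝ) (hγf : Real.cos γf ≠ 0)
    (htrans : p1 tf * Real.cos γf + p2 tf * Real.sin γf = 0) :
    (∀ t ∈ Set.Icc 0 tf, p1 t = p1 0) ∧
    (∀ t ∈ Set.Icc 0 tf, p2 t = p2 0) ∧
    (∀ t ∈ Set.Icc 0 tf, p1 t = -(p2 t) * Real.tan γf) ∧
    (∀ t ∈ Set.Icc 0 tf,
      HasDerivAt (fun s => -(p3 s))
        (a * p2 t * Real.cos (x3 t - γf) / Real.cos γf) t) := by
  have h1 := const_of_deriv_zero p1 hp1
  have h2 := const_of_deriv_zero p2 hp2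
  have htfmem : tf ∈ Set.Icc 0 tf := ⟨htf.le, le_refl tf⟩
  have hrel : ∀ t ∈ Set.Icc 0 tf, p1 t = -(p2 t) * Real.tan γf := by
    intro t ht
    have e1 : p1 t = p1 tf := by rw [h1 t ht, h1 tf htfmem]
    have e2 : p2 t = p2 tf := by rw [h2 t ht, h2 tf htfmem]
    rw [e1, e2, Real.tan_eq_sin_div_cos]
    field_simp
    linarith [htrans]
  refine ⟨h1, h2, hrel, ?_⟩
  intro t ht
  have hd : HasDerivAt (fun s => -(p3 s)) _ t := (hp3 t ht).neg
  convert hd using 1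
  rw [hrel t ht, Real.cos_sub, Real.tan_eq_sin_div_cos]
  field_simp
  ring
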